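/- Let f : {-1,1}^n → {-1,1}, let 𝒞 be a partition of {-1,1}^n into subcubes such that f is constant on each subcube, and let 𝒯 ⊆ 𝒞 be a subfamily whose union covers at least a (1−δ) fraction of {-1,1}^n, i.e. Σ_{C ∈ 𝒯} 2^{−codim(C)} ≥ 1−δ. Let ℬ = { S ⊆ [n] : S ⊆ fixed(C) for some C ∈ 𝒯 }, where fixed(C) is the set of coordinates fixed by the subcube C. Then the Fourier weight of f outside ℬ is small: Σ_{S ∉ ℬ} f̂(S)² ≤ δ. -/

import Mathlib

open Finset

/-- The real value (`1` or `-1`) encoded by a Boolean. -/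
noncomputable def bsgn (b : Bool) : ℝ := if b then 1 else -1

/-- The character `χ_S(x) = ∏_{i ∈ S} x_i` on the hypercube `{-1,1}^n`. -/
noncomputable def chi {n : ℕ} (S : Finset (Fin n)) (x : Fin n → Bool) : ℝ :=
  ∏ i ∈ S, bsgn (x i)

/-- The Fourier coefficient `f̂(S) = E_x [f(x)·χ_S(x)]`. -/
noncomputable def fCoeff {n : ℕ} (f : (Fin n → Bool) → ℝ) (S : Finset (Fin n)) : ℝ :=
  (∑ x : Fin n → Bool, f x * chi S x) / 2 ^ n

/-- The Fourier (Shannon) entropy `H(f̂²) = Σ_S f̂(S)² log₂(1/f̂(S)²)`. -/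
noncomputable def fEntropy {n : ℕ} (f : (Fin n → Bool) → ℝ) : ℝ :=
  ∑ S : Finset (Fin n), (fCoeff f S) ^ 2 * Real.logb 2 (1 / (fCoeff f S) ^ 2)

/-- The Fourier min-entropy `H_∞(f̂²) = min_{S : f̂(S) ≠ 0} log₂(1/f̂(S)²)`. -/
noncomputable def fMinEntropy {n : ℕ} (f : (Fin n → Bool) → ℝ) : ℝ :=
  sInf {y : ℝ | ∃ S : Finset (Fin n),
    fCoeff f S ≠ 0 ∧ y = Real.logb 2 (1 / (fCoeff f S) ^ 2)}

/-- The total influence `Inf(f) = Σ_S |S|·f̂(S)²`. -/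
noncomputable def totalInf {n : ℕ} (f : (Fin n → Bool) → ℝ) : ℝ :=
  ∑ S : Finset (Fin n), (S.card : ℝ) * (fCoeff f S) ^ 2

/-- `f` is a Boolean (`±1`-valued) function. -/
def IsBooleanFunc {n : ℕ} (f : (Fin n → Bool) → ℝ) : Prop := ∀ x, f x = 1 ∨ f x = -1


lemma bsgn_sq (b : Bool) : bsgn b * bsgn b = 1 := by cases b <;> simp [bsgn]

lemma bsgn_not (b : Bool) : bsgn (!b) = - bsgn b := by cases b <;> simp [bsgn]

lemma sum_chi_mul {n : ℕ} (x y : Fin n → Bool) :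
    ∑ S : Finset (Fin n), chi S x * chi S y = if x = y then (2:ℝ)^n else 0 := by
  have h : ∀ S : Finset (Fin n), chi S x * chi S y
      = ∏ i ∈ S, (bsgn (x i) * bsgn (y i)) := by
    intro S; rw [chi, chi, ← Finset.prod_mul_distrib]
  have key : ∑ S : Finset (Fin n), chi S x * chi S y
      = ∏ i : Fin n, (bsgn (x i) * bsgn (y i) + 1) := by
    rw [Finset.prod_add]
    rw [← Finset.powerset_univ]
    refine (Finset.sum_congr rfl fun S _ => ?_).symm
    rw [h S, Finset.prod_const_one, mul_one]
  rw [key]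
  by_cases hxy : x = y
  · subst hxy
    simp only [if_pos rfl]
    rw [Finset.prod_congr rfl (fun i _ => by rw [bsgn_sq])]
    norm_num
  · rw [if_neg hxy]
    obtain ⟨i, hi⟩ : ∃ i, x i ≠ y i := by
      by_contra h'; push_neg at h'; exact hxy (funext h')
    apply Finset.prod_eq_zero (Finset.mem_univ i)
    cases hx : x i <;> cases hy : y i <;> simp_all [bsgn]

lemma parseval {n : ℕ} (g : (Fin n → Bool) → ℝ) :
    ∑ S : Finset (Fin n), (fCoeff g S)^2 = (∑ x : Fin n → Bool, g x ^ 2) / 2 ^ n := by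
  have h2 : ((2:ℝ)^n) ≠ 0 := by positivity
  have h1 : ∀ S : Finset (Fin n), (fCoeff g S)^2
      = (∑ x : Fin n → Bool, ∑ y : Fin n → Bool,
          g x * g y * (chi S x * chi S y)) / (2^n * 2^n) := by
    intro S
    rw [fCoeff, div_pow, sq, Finset.sum_mul_sum]
    congr 1
    · exact Finset.sum_congr rfl fun x _ => Finset.sum_congr rfl fun y _ => by ring
    · ring
  calc ∑ S : Finset (Fin n), (fCoeff g S)^2
      = (∑ S : Finset (Fin n), ∑ x : Fin n → Bool, ∑ y : Fin n → Bool,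
          g x * g y * (chi S x * chi S y)) / (2^n * 2^n) := by
        rw [Finset.sum_congr rfl fun S _ => h1 S, ← Finset.sum_div]
    _ = (∑ x : Fin n → Bool, ∑ y : Fin n → Bool, g x * g y
          * ∑ S : Finset (Fin n), chi S x * chi S y) / (2^n * 2^n) := by
        congr 1
        rw [Finset.sum_comm]
        refine Finset.sum_congr rfl fun x _ => ?_
        rw [Finset.sum_comm]
        exact Finset.sum_congr rfl fun y _ => (Finset.mul_sum _ _ _).symm
    _ = (∑ x : Fin n → Bool, g x ^ 2 * 2^n) / (2^n * 2^n) := by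
        congr 1
        refine Finset.sum_congr rfl fun x _ => ?_
        simp only [sum_chi_mul, mul_ite, mul_zero]
        rw [Finset.sum_ite_eq (Finset.univ) x (fun y => g x * g y * 2^n)]
        simp [sq]
    _ = (∑ x : Fin n → Bool, g x ^ 2) / 2 ^ n := by
        rw [← Finset.sum_mul]; field_simp

lemma cube_card {n : ℕ} (d : Finset (Fin n)) (v : Fin n → Bool) :
    (Finset.univ.filter (fun x : Fin n → Bool => ∀ j ∈ d, x j = v j)).card
      = 2 ^ (n - d.card) := by
  classical
  have e : {x : Fin n → Bool // ∀ j ∈ d, x j = v j} ≃ ({j : Fin n // j ∉ d} → Bool) :=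
    { toFun := fun x j => x.1 j.1
      invFun := fun y => ⟨fun j => if h : j ∈ d then v j else y ⟨j, h⟩,
        fun j hj => by simp [hj]⟩
      left_inv := fun x => by
        ext j
        by_cases h : j ∈ d
        · simp [h, x.2 j h]
        · simp [h]
      right_inv := fun y => by
        ext j
        simp [j.2] }
  have h1 : (Finset.univ.filter (fun x : Fin n → Bool => ∀ j ∈ d, x j = v j)).card
      = Fintype.card {x : Fin n → Bool // ∀ j ∈ d, x j = v j} :=
    (Fintype.card_subtype _).symm
  rw [h1, Fintype.card_congr e, Fintype.card_fun]
  congr 1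
  · have : Fintype.card {j : Fin n // j ∉ d} = Fintype.card (Fin n) - Fintype.card {j : Fin n // j ∈ d} :=
      Fintype.card_subtype_compl _
    rw [this, Fintype.card_fin]
    congr 1
    exact Fintype.card_coe d

lemma pow_sub_div {c n : ℕ} (h : c ≤ n) : (2:ℝ)^(n-c) / 2^n = (2:ℝ)^(-(c:ℤ)) := by
  have key : (2:ℝ)^(n-c) * 2^c = 2^n := by rw [← pow_add, Nat.sub_add_cancel h]
  rw [zpow_neg, zpow_natCast]
  field_simp
  linarith [key]

/-- Let `𝒞` be a partition of `{-1,1}^n` into monochromatic subcubes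
(cube `i` fixing the coordinates in `dom i` to values `val i`), and let `𝒯 ⊆ 𝒞` cover at
least a `(1-δ)` fraction of the cube, i.e. `Σ_{i ∈ 𝒯} 2^{-|dom i|} ≥ 1-δ`.  With
`ℬ = {S : S ⊆ dom i for some i ∈ 𝒯}`, the Fourier weight outside `ℬ` satisfies
`Σ_{S ∉ ℬ} f̂(S)² ≤ δ`. -/
theorem stmt10 {n t : ℕ} (f : (Fin n → Bool) → ℝ) (hf : IsBooleanFunc f)
    (dom : Fin t → Finset (Fin n)) (val : Fin t → Fin n → Bool)
    (hpart : ∀ x : Fin n → Bool, ∃! i : Fin t, ∀ j ∈ dom i, x j = val i j)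
    (hmono : ∀ i : Fin t, ∀ x y : Fin n → Bool,
      (∀ j ∈ dom i, x j = val i j) → (∀ j ∈ dom i, y j = val i j) → f x = f y)
    (𝒯 : Finset (Fin t)) (δ : ℝ)
    (hcover : 1 - δ ≤ ∑ i ∈ 𝒯, (2 : ℝ) ^ (-((dom i).card : ℤ))) :
    ∑ S ∈ Finset.univ.filter (fun S : Finset (Fin n) => ¬ ∃ i ∈ 𝒯, S ⊆ dom i),
      (fCoeff f S) ^ 2 ≤ δ := by
  classical
  set cube : Fin t → Finset (Fin n → Bool) :=
    fun i => Finset.univ.filter (fun x => ∀ j ∈ dom i, x j = val i j) with hcube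
  set p : (Fin n → Bool) → Prop := fun x => ∃ i ∈ 𝒯, ∀ j ∈ dom i, x j = val i j with hp
  set g : (Fin n → Bool) → ℝ := fun x => if p x then 0 else f x with hg
  -- disjointness of cubes
  have hdisj : ∀ i ∈ 𝒯, ∀ i' ∈ 𝒯, i ≠ i' → Disjoint (cube i) (cube i') := by
    intro i _ i' _ hne
    rw [Finset.disjoint_left]
    intro x hx hx'
    rw [hcube] at hx hx'
    simp only [Finset.mem_filter] at hx hx'
    obtain ⟨u, -, hu⟩ := hpart x
    exact hne ((hu i hx.2).trans (hu i' hx'.2).symm)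
  have hA : Finset.univ.filter p = 𝒯.biUnion cube := by
    ext x
    simp only [hcube, hp, Finset.mem_filter, Finset.mem_biUnion, Finset.mem_univ, true_and]
  -- sum of f·χ_S over a cube whose fixed set does not contain S vanishes
  have hcube_sum : ∀ S : Finset (Fin n), ∀ i : Fin t, ¬ S ⊆ dom i →
      ∑ x ∈ cube i, f x * chi S x = 0 := by
    intro S i hns
    obtain ⟨j, hjS, hjd⟩ : ∃ j ∈ S, j ∉ dom i := by
      by_contra h; push_neg at h; exact hns h
    have mem_iff : ∀ x, x ∈ cube i ↔ ∀ j' ∈ dom i, x j' = val i j' := by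
      intro x; rw [hcube]; simp
    have upd_mem : ∀ x, x ∈ cube i → Function.update x j (!x j) ∈ cube i := by
      intro x hx
      rw [mem_iff] at hx ⊢
      intro j' hj'
      rw [Function.update_of_ne (by rintro rfl; exact hjd hj') _ _]
      exact hx j' hj'
    have chi_upd : ∀ x : Fin n → Bool, chi S (Function.update x j (!x j)) = - chi S x := by
      intro x
      rw [chi, chi, ← Finset.mul_prod_erase S _ hjS, ← Finset.mul_prod_erase S _ hjS]
      rw [Function.update_self, bsgn_not]
      rw [Finset.prod_congr rfl (fun i' hi' => by
        rw [Function.update_of_ne (Finset.ne_of_mem_erase hi') _ _])]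
      ring
    refine Finset.sum_involution (fun x _ => Function.update x j (!x j)) ?_ ?_ ?_ ?_
    · intro x hx
      have hfx : f (Function.update x j (!x j)) = f x := by
        refine hmono i _ _ ?_ ?_
        · rw [← mem_iff]; exact upd_mem x hx
        · rw [← mem_iff]; exact hx
      rw [hfx, chi_upd]; ring
    · intro x hx _
      intro h
      have := congrFun h j
      simp at this
    · intro x hx; exact upd_mem x hx
    · intro x hx
      ext j'
      by_cases h : j' = j
      · subst h; simp
      · simp [Function.update_of_ne h]
  -- Fourier coefficients of f and g agree outside ℬ
  have hcoeff : ∀ S : Finset (Fin n), (¬ ∃ i ∈ 𝒯, S ⊆ dom i) → fCoeff f S = fCoeff g S := by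
    intro S hS
    rw [fCoeff, fCoeff]
    congr 1
    have h0 : ∑ x ∈ Finset.univ.filter p, f x * chi S x = 0 := by
      rw [hA, Finset.sum_biUnion (fun i hi i' hi' hne => hdisj i hi i' hi' hne)]
      exact Finset.sum_eq_zero fun i hi =>
        hcube_sum S i (fun hsub => hS ⟨i, hi, hsub⟩)
    rw [← Finset.sum_filter_add_sum_filter_not Finset.univ p (fun x => f x * chi S x),
        ← Finset.sum_filter_add_sum_filter_not Finset.univ p (fun x => g x * chi S x)]
    rw [h0]
    have h1 : ∑ x ∈ Finset.univ.filter p, g x * chi S x = 0 :=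
      Finset.sum_eq_zero fun x hx => by
        rw [hg]; simp [(Finset.mem_filter.mp hx).2]
    rw [h1]
    refine congrArg (0 + ·) (Finset.sum_congr rfl fun x hx => ?_)
    have hx' := (Finset.mem_filter.mp hx).2
    rw [hg]; simp [hx']
  -- counting
  have hcard : (Finset.univ.filter p).card = ∑ i ∈ 𝒯, 2 ^ (n - (dom i).card) := by
    rw [hA, Finset.card_biUnion hdisj]
    exact Finset.sum_congr rfl fun i _ => by rw [hcube]; exact cube_card (dom i) (val i)
  have hsum_g : ∑ x : Fin n → Bool, g x ^ 2
      = ((Finset.univ.filter (fun x => ¬ p x)).card : ℝ) := by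
    rw [Finset.card_filter, Nat.cast_sum]
    refine Finset.sum_congr rfl fun x _ => ?_
    by_cases h : p x
    · rw [hg]; simp [h]
    · rw [hg]
      rcases hf x with h1 | h1 <;> simp [h, h1]
  have hcard2 : (Finset.univ.filter p).card + (Finset.univ.filter (fun x => ¬ p x)).card
      = 2 ^ n := by
    rw [Finset.card_filter_add_card_filter_not]
    simp [Fintype.card_fun]
  -- put it together
  have h2n : ((2:ℝ)^n) ≠ 0 := by positivity
  calc ∑ S ∈ Finset.univ.filter (fun S : Finset (Fin n) => ¬ ∃ i ∈ 𝒯, S ⊆ dom i),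
        (fCoeff f S) ^ 2
      = ∑ S ∈ Finset.univ.filter (fun S : Finset (Fin n) => ¬ ∃ i ∈ 𝒯, S ⊆ dom i),
        (fCoeff g S) ^ 2 :=
        Finset.sum_congr rfl fun S hS => by
          rw [hcoeff S (Finset.mem_filter.mp hS).2]
    _ ≤ ∑ S : Finset (Fin n), (fCoeff g S) ^ 2 :=
        Finset.sum_le_sum_of_subset_of_nonneg (Finset.filter_subset _ _)
          (fun S _ _ => sq_nonneg _)
    _ = (∑ x : Fin n → Bool, g x ^ 2) / 2 ^ n := parseval g
    _ ≤ δ := by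
        rw [hsum_g]
        have hC : ((Finset.univ.filter p).card : ℝ)
            = ∑ i ∈ 𝒯, (2:ℝ) ^ (n - (dom i).card) := by
          rw [hcard]; push_cast; rfl
        have hfrac : ((Finset.univ.filter p).card : ℝ) / 2 ^ n
            = ∑ i ∈ 𝒯, (2:ℝ) ^ (-((dom i).card : ℤ)) := by
          rw [hC, Finset.sum_div]
          refine Finset.sum_congr rfl fun i _ => ?_
          exact pow_sub_div (by simpa using Finset.card_le_univ (dom i))
        have hcast : ((Finset.univ.filter p).card : ℝ)
            + ((Finset.univ.filter (fun x => ¬ p x)).card : ℝ) = 2 ^ n := by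
          rw [← Nat.cast_add, hcard2]; push_cast; ring
        rw [div_le_iff₀ (by positivity)]
        have h4 := hcover
        rw [← hfrac, le_div_iff₀ (by positivity : (0:ℝ) < 2^n)] at h4
        linarith [hcast, h4]
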